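/- Let B > 0 and 0 ≤ ε < 1, and set M = (B(1-ε)²/(2(2ε+n(1-ε))))^(1/(1-ε)). Suppose u is continuous on the closed unit ball of ℝⁿ, nonnegative on the open unit ball D₁, C² on the open set ω = {x ∈ D₁ : u(x) ≠ 0}, and satisfies Δu(x) - B·u(x)^ε ≥ 0 on ω. If u(0) ≠ 0, then sup_{x ∈ D₁} u(x) > M. -/

import Mathlib

open Filter Set Metric Topology

-- second derivative test (necessary condition at a local max)
lemma second_deriv_test_max {f : ℝ → ℝ} {c : ℝ}
    (hd : ∀ᶠ t in 𝓝 (0:ℝ), DifferentiableAt ℝ f t)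
    (h2 : HasDerivAt (deriv f) c 0) (hmax : IsLocalMax f 0) : c ≤ 0 := by
  by_contra hc
  push_neg at hc
  have h0 : deriv f 0 = 0 := hmax.deriv_eq_zero
  have hslope : Tendsto (slope (deriv f) 0) (𝓝[≠] 0) (𝓝 c) :=
    hasDerivAt_iff_tendsto_slope.mp h2
  have hpos : ∀ᶠ t in 𝓝[≠] (0:ℝ), 0 < slope (deriv f) 0 t :=
    hslope.eventually (eventually_gt_nhds hc)
  have hpos2 : ∀ᶠ t in 𝓝[>] (0:ℝ), 0 < slope (deriv f) 0 t :=
    hpos.filter_mono (nhdsWithin_mono 0 (fun x hx => ne_of_gt hx))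
  obtain ⟨b, hb, hIoo⟩ := mem_nhdsGT_iff_exists_Ioo_subset.mp hpos2
  obtain ⟨ε₂, hε₂, H2⟩ := Metric.eventually_nhds_iff.mp hd
  obtain ⟨ε₃, hε₃, H3⟩ := Metric.eventually_nhds_iff.mp hmax
  set b' := min (b/2) (ε₂/2) with hb'def
  have hb' : 0 < b' := lt_min (by linarith [mem_Ioi.mp hb]) (by linarith)
  have hmono : StrictMonoOn f (Icc 0 b') := by
    apply strictMonoOn_of_deriv_pos (convex_Icc _ _)
    · intro t ht
      have : DifferentiableAt ℝ f t := by
        apply H2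
        rw [Real.dist_eq, sub_zero, abs_of_nonneg ht.1]
        calc t ≤ b' := ht.2
        _ ≤ ε₂/2 := min_le_right _ _
        _ < ε₂ := by linarith
      exact this.continuousAt.continuousWithinAt
    · intro t ht
      rw [interior_Icc] at ht
      have hts : 0 < slope (deriv f) 0 t := by
        apply hIoo
        constructor
        · exact ht.1
        · calc t < b' := ht.2
          _ ≤ b/2 := min_le_left _ _
          _ < b := by linarith [mem_Ioi.mp hb]
      rw [slope_def_field, h0] at hts
      have := mul_pos hts ht.1
      rwa [sub_zero, sub_zero, div_mul_cancel₀ _ (ne_of_gt ht.1)] at this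
  set t0 := min b' ε₃ / 2 with ht0def
  have ht0 : 0 < t0 := by positivity
  have h1 : f 0 < f t0 := by
    apply hmono (Set.left_mem_Icc.mpr hb'.le) _ ht0
    constructor
    · exact ht0.le
    · calc t0 ≤ b' / 2 := by
            rw [ht0def]; gcongr; exact min_le_left _ _
      _ ≤ b' := by linarith
  have h2' : f t0 ≤ f 0 := by
    apply H3
    rw [Real.dist_eq, sub_zero, abs_of_nonneg ht0.le]
    calc t0 ≤ ε₃/2 := by rw [ht0def]; gcongr; exact min_le_right _ _
    _ < ε₃ := by linarith
  linarith

/-- Derivatives of the 1-D restriction `t ↦ M (c+(a+t)²)^q + δ(1-(c+(a+t)²))`. -/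
lemma deriv_aux (M δ q a c : ℝ) (hq : 1 ≤ q) (hc : 0 ≤ c) :
    (∀ t : ℝ, HasDerivAt (fun s : ℝ => M * (c + (a+s)^2) ^ q + δ * (1 - (c + (a+s)^2)))
      (M * (2*(a+t) * q * (c + (a+t)^2) ^ (q-1)) - δ * (2*(a+t))) t) ∧
    HasDerivAt (fun t : ℝ => M * (2*(a+t) * q * (c + (a+t)^2) ^ (q-1)) - δ * (2*(a+t)))
      (M * (2*q*(c+a^2)^(q-1) + 4*q*(q-1)*a^2*(c+a^2)^(q-2)) - 2*δ) 0 := by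
  have hFat : ∀ t : ℝ, HasDerivAt (fun s : ℝ => c + (a+s)^2) (2*(a+t)) t := by
    intro t
    have h1 : HasDerivAt (fun s : ℝ => a + s) 1 t := (hasDerivAt_id t).const_add a
    have h2 := (h1.pow 2).const_add c
    refine h2.congr_deriv ?_
    ring
  constructor
  · intro t
    have h4 := ((hFat t).rpow_const (p := q) (Or.inr hq)).const_mul M
    have h5 := ((hFat t).const_mul δ).const_sub δ
    have h6 := h4.add h5
    have hfun : (fun s : ℝ => M * (c + (a+s)^2) ^ q + δ * (1 - (c + (a+s)^2)))
        = fun s : ℝ => M * (c + (a+s)^2) ^ q + (δ - δ * (c + (a+s)^2)) := by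
      funext s; ring
    rw [hfun]
    refine h6.congr_deriv ?_
    ring
  · rcases eq_or_lt_of_le hq with hq1 | hq1
    · -- q = 1
      subst hq1
      have hfun : (fun t : ℝ => M * (2*(a+t) * 1 * (c + (a+t)^2) ^ ((1:ℝ)-1)) - δ * (2*(a+t)))
          = fun t : ℝ => (2*M - 2*δ) * (a + t) := by
        funext t
        rw [show (1:ℝ) - 1 = 0 by ring, Real.rpow_zero]
        ring
      rw [hfun]
      have h := ((hasDerivAt_id (0:ℝ)).const_add a).const_mul (2*M - 2*δ)
      refine h.congr_deriv ?_
      rw [show (1:ℝ) - 1 = 0 by ring, Real.rpow_zero]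
      ring
    · rcases eq_or_lt_of_le (show (0:ℝ) ≤ c + a^2 by positivity) with hr | hr
      · -- degenerate point: c = 0, a = 0
        have ha : a = 0 := by nlinarith [sq_nonneg a]
        have hcc : c = 0 := by nlinarith [sq_nonneg a]
        subst ha; subst hcc
        have key : HasDerivAt (fun t : ℝ => t * (t^2) ^ (q-1)) 0 0 := by
          rw [hasDerivAt_iff_tendsto_slope]
          have htt : Tendsto (fun t : ℝ => (t^2) ^ (q-1)) (𝓝 0) (𝓝 0) := by
            have h := Real.continuousAt_rpow_const 0 (q-1) (Or.inr (by linarith))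
            have h2 : Tendsto (fun t : ℝ => t^2) (𝓝 0) (𝓝 0) := by
              simpa using ((continuous_pow 2).tendsto (0:ℝ))
            have h3 := h.tendsto.comp h2
            simpa [Function.comp_def, Real.zero_rpow (show q - 1 ≠ 0 by linarith)] using h3
          refine Tendsto.congr' ?_ (htt.mono_left nhdsWithin_le_nhds)
          filter_upwards [self_mem_nhdsWithin] with t ht
          simp only [mem_compl_iff, mem_singleton_iff] at ht
          rw [slope_def_field]
          field_simp
          ring
        have hfun : (fun t : ℝ => M * (2*((0:ℝ)+t) * q * ((0:ℝ) + ((0:ℝ)+t)^2) ^ (q-1)) - δ * (2*((0:ℝ)+t)))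
            = fun t : ℝ => (M*2*q) * (t * (t^2) ^ (q-1)) - (2*δ) * t := by
          funext t
          simp only [zero_add]
          ring
        rw [hfun]
        have h := (key.const_mul (M*2*q)).sub ((hasDerivAt_id (0:ℝ)).const_mul (2*δ))
        refine h.congr_deriv ?_
        rw [show ((0:ℝ) + 0^2 : ℝ) = 0 by norm_num, Real.zero_rpow (show q - 1 ≠ 0 by linarith)]
        ring
      · -- c + a² > 0
        have h1 := hFat 0
        have h2 := h1.rpow_const (p := q - 1) (Or.inl (by simpa using hr.ne'))
        have h3 : HasDerivAt (fun t : ℝ => a + t) 1 0 := (hasDerivAt_id 0).const_add a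
        have h4 := h3.mul h2
        have h5 := (h4.const_mul (M*2*q)).sub (h3.const_mul (2*δ))
        have hfun : (fun t : ℝ => M * (2*(a+t) * q * (c + (a+t)^2) ^ (q-1)) - δ * (2*(a+t)))
            = fun t : ℝ => (M*2*q) * ((a+t) * (c + (a+t)^2) ^ (q-1)) - (2*δ) * (a + t) := by
          funext t; ring
        rw [hfun]
        refine h5.congr_deriv ?_
        have e1 : q - 1 - 1 = q - 2 := by ring
        simp only [add_zero, id_eq, e1]
        ring
-- helper: squared norm in EuclideanSpace
lemma euclid_normsq {n : ℕ} (y : EuclideanSpace ℝ (Fin n)) : ‖y‖^2 = ∑ j, (y j)^2 := by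
  rw [EuclideanSpace.norm_eq, Real.sq_sqrt (by positivity)]
  congr 1
  funext j
  rw [Real.norm_eq_abs, sq_abs]

noncomputable def lap {n : ℕ} (u : EuclideanSpace ℝ (Fin n) → ℝ)
    (x : EuclideanSpace ℝ (Fin n)) : ℝ :=
  ∑ i, iteratedFDeriv ℝ 2 u x ![EuclideanSpace.single i 1, EuclideanSpace.single i 1]

set_option maxHeartbeats 3200000 in
theorem stmt1 (n : ℕ) (hn : 1 ≤ n) (B ε : ℝ) (hB : 0 < B) (hε0 : 0 ≤ ε) (hε1 : ε < 1)
    (M : ℝ) (hM : M = (B * (1 - ε) ^ 2 / (2 * (2 * ε + n * (1 - ε)))) ^ (1 / (1 - ε)))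
    (u : EuclideanSpace ℝ (Fin n) → ℝ)
    (hcont : ContinuousOn u (Metric.closedBall 0 1))
    (hnonneg : ∀ x ∈ Metric.ball (0 : EuclideanSpace ℝ (Fin n)) 1, 0 ≤ u x)
    (hC2 : ContDiffOn ℝ 2 u {x | x ∈ Metric.ball (0 : EuclideanSpace ℝ (Fin n)) 1 ∧ u x ≠ 0})
    (hineq : ∀ x ∈ {x | x ∈ Metric.ball (0 : EuclideanSpace ℝ (Fin n)) 1 ∧ u x ≠ 0},
      lap u x - B * u x ^ ε ≥ 0)
    (h0 : u 0 ≠ 0) :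
    ∃ x ∈ Metric.ball (0 : EuclideanSpace ℝ (Fin n)) 1, M < u x := by
  by_contra hcon
  push_neg at hcon
  -- basic positivity facts
  set q : ℝ := 1 / (1 - ε) with hqdef
  have h1ε : (0:ℝ) < 1 - ε := by linarith
  have hq1 : 1 ≤ q := by rw [hqdef, le_div_iff₀ h1ε]; linarith
  have hq0 : 0 < q := by linarith
  have hn1 : (1:ℝ) ≤ (n:ℝ) := by exact_mod_cast hn
  have hden : (0:ℝ) < 2 * (2 * ε + n * (1 - ε)) := by nlinarith
  have hbase : (0:ℝ) < B * (1 - ε)^2 / (2 * (2 * ε + n * (1 - ε))) := by positivity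
  have hM0 : 0 < M := by rw [hM]; exact Real.rpow_pos_of_pos hbase _
  have hMe : M ^ (1 - ε) = B * (1 - ε)^2 / (2 * (2 * ε + n * (1 - ε))) := by
    rw [hM, ← Real.rpow_mul hbase.le, hqdef, one_div_mul_cancel (ne_of_gt h1ε), Real.rpow_one]
  have hMcoef : M * (2*(n:ℝ)*q + 4*q*(q-1)) = B * M ^ ε := by
    have hsplit : M = M ^ ε * M ^ (1 - ε) := by
      rw [← Real.rpow_add hM0]; norm_num
    have hco : 2*(n:ℝ)*q + 4*q*(q-1) = 2 * (2*ε + (n:ℝ)*(1-ε)) / (1-ε)^2 := by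
      rw [hqdef]; field_simp; ring
    rw [hco]
    nth_rewrite 1 [hsplit]
    rw [hMe]
    field_simp
  have hu0 : 0 < u 0 := lt_of_le_of_ne (hnonneg 0 (Metric.mem_ball_self one_pos)) (Ne.symm h0)
  set δ : ℝ := u 0 / 2 with hδdef
  have hδ : 0 < δ := by positivity
  set v : EuclideanSpace ℝ (Fin n) → ℝ :=
    fun x => M * ((‖x‖^2 : ℝ)) ^ q + δ * (1 - ‖x‖^2) with hvdef
  set w : EuclideanSpace ℝ (Fin n) → ℝ := fun x => u x - v x with hwdef
  have hvcont : Continuous v := by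
    rw [hvdef]
    apply Continuous.add
    · exact continuous_const.mul ((continuous_norm.pow 2).rpow_const (fun x => Or.inr hq0.le))
    · exact continuous_const.mul (continuous_const.sub (continuous_norm.pow 2))
  -- u ≤ M on the closed ball
  have hball : ∀ x ∈ Metric.closedBall (0 : EuclideanSpace ℝ (Fin n)) 1, u x ≤ M := by
    intro x hx
    have hxcl : x ∈ closure (Metric.ball (0 : EuclideanSpace ℝ (Fin n)) 1) := by
      rw [closure_ball (0 : EuclideanSpace ℝ (Fin n)) one_ne_zero]; exact hx
    have hne : (𝓝[Metric.ball (0 : EuclideanSpace ℝ (Fin n)) 1] x).NeBot :=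
      mem_closure_iff_nhdsWithin_neBot.mp hxcl
    have htd : Tendsto u (𝓝[Metric.ball (0:EuclideanSpace ℝ (Fin n)) 1] x) (𝓝 (u x)) :=
      (hcont x hx).mono Metric.ball_subset_closedBall
    exact le_of_tendsto htd (eventually_nhdsWithin_of_forall hcon)
  -- maximum of w on the closed ball
  obtain ⟨x₀, hx₀cl, hmax⟩ :=
    (isCompact_closedBall (0 : EuclideanSpace ℝ (Fin n)) 1).exists_isMaxOn
      ⟨0, Metric.mem_closedBall_self one_pos.le⟩ (hcont.sub hvcont.continuousOn)
  have hv0 : v 0 = δ := by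
    rw [hvdef]
    simp [Real.zero_rpow (ne_of_gt hq0)]
  have hw0 : w 0 = δ := by
    rw [hwdef]; simp only [hv0]; rw [hδdef]; ring
  have hwx₀ : δ ≤ w x₀ := by
    have h := hmax (Metric.mem_closedBall_self one_pos.le)
    have h' : u 0 - v 0 ≤ u x₀ - v x₀ := h
    have hwx : w x₀ = u x₀ - v x₀ := rfl
    have hw0' : u 0 - v 0 = δ := hw0
    linarith
  have hx₀n : ‖x₀‖ ≤ 1 := mem_closedBall_zero_iff.mp hx₀cl
  have hx₀ball : x₀ ∈ Metric.ball (0 : EuclideanSpace ℝ (Fin n)) 1 := by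
    rcases lt_or_eq_of_le hx₀n with h | h
    · exact mem_ball_zero_iff.mpr h
    · exfalso
      have hvx : v x₀ = M := by
        rw [hvdef]; simp [h, Real.one_rpow]
      have : w x₀ = u x₀ - M := by rw [hwdef]; simp [hvx]
      have hu : u x₀ ≤ M := hball x₀ hx₀cl
      rw [this] at hwx₀
      linarith
  set r : ℝ := ‖x₀‖^2 with hrdef
  have hr0 : 0 ≤ r := sq_nonneg _
  have hr1 : r ≤ 1 := by
    rw [hrdef]; nlinarith [norm_nonneg x₀]
  have hvx₀ : v x₀ = M * r ^ q + δ * (1 - r) := by rw [hvdef]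
  have huwv : u x₀ = w x₀ + v x₀ := by rw [hwdef]; ring
  have hux₀ : M * r ^ q + δ ≤ u x₀ := by
    rw [huwv, hvx₀]
    have : 0 ≤ δ * (1 - r) := by nlinarith
    linarith
  have hupos : 0 < u x₀ := by
    have : 0 ≤ M * r ^ q := by positivity
    linarith
  -- the set ω is open and x₀ belongs to it
  have hωopen : IsOpen {x | x ∈ Metric.ball (0 : EuclideanSpace ℝ (Fin n)) 1 ∧ u x ≠ 0} := by
    have hcb : ContinuousOn u (Metric.ball (0 : EuclideanSpace ℝ (Fin n)) 1) :=
      hcont.mono Metric.ball_subset_closedBall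
    have hset : {x | x ∈ Metric.ball (0 : EuclideanSpace ℝ (Fin n)) 1 ∧ u x ≠ 0}
        = Metric.ball (0 : EuclideanSpace ℝ (Fin n)) 1 ∩ u ⁻¹' ({0}ᶜ) := by
      rfl
    rw [hset]
    exact hcb.isOpen_inter_preimage Metric.isOpen_ball isOpen_compl_singleton
  have hx₀ω : x₀ ∈ {x | x ∈ Metric.ball (0 : EuclideanSpace ℝ (Fin n)) 1 ∧ u x ≠ 0} :=
    ⟨hx₀ball, ne_of_gt hupos⟩
  have hCAt : ContDiffAt ℝ 2 u x₀ := hC2.contDiffAt (hωopen.mem_nhds hx₀ω)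
  have hlocw : IsLocalMax w x₀ := hmax.isLocalMax
    (mem_nhds_iff.mpr ⟨Metric.ball 0 1, Metric.ball_subset_closedBall, Metric.isOpen_ball, hx₀ball⟩)
  -- per-direction second derivative bound
  have key : ∀ i : Fin n,
      iteratedFDeriv ℝ 2 u x₀ ![EuclideanSpace.single i 1, EuclideanSpace.single i 1]
        ≤ M * (2*q*r^(q-1) + 4*q*(q-1)*(x₀ i)^2 * r^(q-2)) - 2*δ := by
    intro i
    set a : ℝ := x₀ i with hadef
    set c : ℝ := r - a^2 with hcdef
    have hc : 0 ≤ c := by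
      rw [hcdef, hrdef, euclid_normsq]
      have h2 : (x₀ i)^2 ≤ ∑ j, (x₀ j)^2 :=
        Finset.single_le_sum (f := fun j => (x₀ j)^2) (fun j _ => sq_nonneg _)
          (Finset.mem_univ i)
      rw [hadef]; linarith
    set L : ℝ → EuclideanSpace ℝ (Fin n) :=
      fun t => x₀ + t • EuclideanSpace.single i (1:ℝ) with hLdef
    have hL0 : L 0 = x₀ := by rw [hLdef]; simp
    have hF : ∀ t, ‖L t‖^2 = c + (a + t)^2 := by
      intro t
      rw [euclid_normsq]
      have hLj : ∀ j, (L t j)^2 = (x₀ j)^2 + (if j = i then 2*a*t + t^2 else 0) := by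
        intro j
        by_cases h : j = i
        · subst h
          rw [hLdef, hadef]
          simp [PiLp.add_apply, PiLp.smul_apply, EuclideanSpace.single_apply]
          ring
        · rw [hLdef]
          simp [PiLp.add_apply, PiLp.smul_apply, EuclideanSpace.single_apply, h]
      rw [Finset.sum_congr rfl (fun j _ => hLj j), Finset.sum_add_distrib,
        Finset.sum_ite_eq' Finset.univ i]
      simp only [Finset.mem_univ, if_true]
      rw [hcdef, hrdef, euclid_normsq]
      ring
    obtain ⟨hd1, hd2⟩ := deriv_aux M δ q a c hq1 hc
    have hveq : (fun s : ℝ => v (L s))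
        = fun s => M * (c + (a+s)^2) ^ q + δ * (1 - (c + (a+s)^2)) := by
      funext s
      rw [hvdef]
      simp only []
      rw [hF s]
    have hLcont : Continuous L := by
      rw [hLdef]
      exact continuous_const.add (continuous_id.smul continuous_const)
    have hLten : Tendsto L (𝓝 0) (𝓝 x₀) := by
      have := hLcont.tendsto 0
      rwa [hL0] at this
    have hev : ∀ᶠ t in 𝓝 (0:ℝ), ContDiffAt ℝ 2 u (L t) :=
      hLten.eventually (hCAt.eventually (by norm_num))
    have hLd : ∀ t : ℝ, HasDerivAt L (EuclideanSpace.single i 1) t := by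
      intro t
      have h := ((hasDerivAt_id t).smul_const (EuclideanSpace.single i (1:ℝ))).const_add x₀
      rw [hLdef]
      simpa using h
    set ψ : ℝ → ℝ := fun t => fderiv ℝ u (L t) (EuclideanSpace.single i 1) with hψdef
    have hgu : ∀ᶠ t in 𝓝 (0:ℝ), HasDerivAt (fun s => u (L s)) (ψ t) t := by
      filter_upwards [hev] with t ht
      exact (ht.differentiableAt (by norm_num)).hasFDerivAt.comp_hasDerivAt t (hLd t)
    set g : ℝ → ℝ := fun t => w (L t) with hgdef
    set φ : ℝ → ℝ :=
      fun t => M * (2*(a+t) * q * (c + (a+t)^2) ^ (q-1)) - δ * (2*(a+t)) with hφdef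
    have hg' : ∀ᶠ t in 𝓝 (0:ℝ), HasDerivAt g (ψ t - φ t) t := by
      filter_upwards [hgu] with t ht
      have hv' : HasDerivAt (fun s => v (L s)) (φ t) t := by
        rw [hveq]; exact hd1 t
      have := ht.sub hv'
      rw [hgdef, hwdef]
      exact this
    have hgdiff : ∀ᶠ t in 𝓝 (0:ℝ), DifferentiableAt ℝ g t :=
      hg'.mono fun t ht => ht.differentiableAt
    have hgderiv : deriv g =ᶠ[𝓝 0] fun t => ψ t - φ t :=
      hg'.mono fun t ht => ht.deriv
    -- second derivative of the u-part
    have hfd : ContDiffAt ℝ 1 (fderiv ℝ u) x₀ := hCAt.fderiv_right (by norm_num)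
    have hfd2 : HasFDerivAt (fderiv ℝ u) (fderiv ℝ (fderiv ℝ u) x₀) (L 0) := by
      rw [hL0]
      exact (hfd.differentiableAt (by norm_num)).hasFDerivAt
    have hψ0 : HasDerivAt ψ
        (fderiv ℝ (fderiv ℝ u) x₀ (EuclideanSpace.single i 1) (EuclideanSpace.single i 1)) 0 := by
      have hcomp := hfd2.comp_hasDerivAt 0 (hLd 0)
      have happ := hcomp.clm_apply (hasDerivAt_const 0 (EuclideanSpace.single i (1:ℝ)))
      rw [hψdef]
      simpa using happ
    have hsec : HasDerivAt (deriv g)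
        (fderiv ℝ (fderiv ℝ u) x₀ (EuclideanSpace.single i 1) (EuclideanSpace.single i 1)
          - (M * (2*q*(c+a^2)^(q-1) + 4*q*(q-1)*a^2*(c+a^2)^(q-2)) - 2*δ)) 0 :=
      (hψ0.sub hd2).congr_of_eventuallyEq hgderiv
    have hlocg : IsLocalMax g 0 := by
      have h := hLten.eventually hlocw
      refine h.mono fun t ht => ?_
      rw [hgdef]
      simp only []
      rw [hL0]
      exact ht
    have hA := second_deriv_test_max hgdiff hsec hlocg
    have hca : c + a^2 = r := by rw [hcdef]; ring
    rw [hca] at hA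
    rw [iteratedFDeriv_two_apply]
    simp only [Matrix.cons_val_zero, Matrix.cons_val_one, Matrix.head_cons]
    linarith
  -- summation
  have hlapdef : lap u x₀
      = ∑ i, iteratedFDeriv ℝ 2 u x₀ ![EuclideanSpace.single i 1, EuclideanSpace.single i 1] := rfl
  have hxsum : ∑ i, (x₀ i)^2 = r := by rw [hrdef, euclid_normsq]
  have hrr : (4*q*(q-1)) * (r^(q-2) * r) = (4*q*(q-1)) * r^(q-1) := by
    rcases eq_or_lt_of_le hr0 with h | h
    · rcases eq_or_lt_of_le hq1 with h1 | h1
      · rw [← h1]; norm_num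
      · rw [← h, Real.zero_rpow (by linarith : q - 1 ≠ 0)]
        ring
    · rw [mul_comm (r^(q-2)) r]
      nth_rewrite 1 [← Real.rpow_one r]
      rw [← Real.rpow_add h, show (1:ℝ)+(q-2) = q-1 by ring]
  have hsum2 : ∑ i : Fin n, (M * (2*q*r^(q-1) + 4*q*(q-1)*(x₀ i)^2 * r^(q-2)) - 2*δ)
      = (n:ℝ) * (M * (2*q*r^(q-1)) - 2*δ) + (M*(4*q*(q-1)*r^(q-2))) * r := by
    have hterm : ∀ i : Fin n, M * (2*q*r^(q-1) + 4*q*(q-1)*(x₀ i)^2 * r^(q-2)) - 2*δ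
        = (M * (2*q*r^(q-1)) - 2*δ) + (M*(4*q*(q-1)*r^(q-2))) * (x₀ i)^2 := fun i => by ring
    rw [Finset.sum_congr rfl (fun i _ => hterm i), Finset.sum_add_distrib, Finset.sum_const,
      ← Finset.mul_sum, hxsum]
    simp [Finset.card_univ, nsmul_eq_mul]
  have hupper : lap u x₀ ≤ M * ((2*(n:ℝ)*q + 4*q*(q-1)) * r^(q-1)) - (n:ℝ)*(2*δ) := by
    have hs : lap u x₀ ≤ ∑ i : Fin n, (M * (2*q*r^(q-1) + 4*q*(q-1)*(x₀ i)^2 * r^(q-2)) - 2*δ) := by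
      rw [hlapdef]
      exact Finset.sum_le_sum (fun i _ => key i)
    rw [hsum2] at hs
    have heq : (n:ℝ) * (M * (2*q*r^(q-1)) - 2*δ) + (M*(4*q*(q-1)*r^(q-2))) * r
        = M * ((2*(n:ℝ)*q + 4*q*(q-1)) * r^(q-1)) - (n:ℝ)*(2*δ) := by
      linear_combination M * hrr
    linarith only [hs, heq]
  clear key hlapdef hsum2 hxsum hrr
  -- the lower bound coming from the differential inequality
  have hlow : B * M^ε * r^(q-1) ≤ lap u x₀ := by
    have h := hineq x₀ hx₀ω
    have h2 : B * (u x₀)^ε ≤ lap u x₀ := sub_nonneg.mp h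
    have h3 : M * r^q ≤ u x₀ := by linarith only [hux₀, hδ]
    have h4 : (M * r^q)^ε ≤ (u x₀)^ε :=
      Real.rpow_le_rpow (mul_nonneg hM0.le (Real.rpow_nonneg hr0 q)) h3 hε0
    have hqε : q * ε = q - 1 := by rw [hqdef]; field_simp; ring
    have h5 : (M * r^q)^ε = M^ε * r^(q-1) := by
      rw [Real.mul_rpow hM0.le (Real.rpow_nonneg hr0 q), ← Real.rpow_mul hr0, hqε]
    calc B * M^ε * r^(q-1) = B * (M * r^q)^ε := by rw [h5]; ring
      _ ≤ B * (u x₀)^ε := by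
          have hh := mul_le_mul_of_nonneg_left h4 hB.le
          linarith only [hh]
      _ ≤ lap u x₀ := h2
  have hfinal : M * ((2*(n:ℝ)*q + 4*q*(q-1)) * r^(q-1)) = B * M^ε * r^(q-1) := by
    rw [← mul_assoc, hMcoef, mul_assoc]
  rw [hfinal] at hupper
  have hnd : 2*δ ≤ (n:ℝ)*(2*δ) := le_mul_of_one_le_left (by linarith) hn1
  linarith only [hupper, hlow, hnd, hδ]
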